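/- Equivalence of LSkG and LSkT, second direction: for any LSkT derivation of T ⊢ C, there exists an LSkG derivation of T* | ⊢ C, where T* turns a tree into a formula by replacing commas with ⊗ and the empty tree with I. -/
import Mathlib


/-- Formulae of left skew monoidal closed logic: atoms, unit I, ⊗, ⊸. -/
inductive Fma : Type
  | atom : ℕ → Fma
  | I : Fma
  | tens : Fma → Fma → Fma
  | lolli : Fma → Fma → Fma

/-- Derivability in the stoup sequent calculus LSkG: `GDer S Γ A` means `S | Γ ⊢ A`. -/
inductive GDer : Option Fma → List Fma → Fma → Prop
  | ax {A} : GDer (some A) [] A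
  | lolliL {A B C Γ Δ} : GDer none Γ A → GDer (some B) Δ C →
      GDer (some (Fma.lolli A B)) (Γ ++ Δ) C
  | IL {Γ C} : GDer none Γ C → GDer (some Fma.I) Γ C
  | tensL {A B Γ C} : GDer (some A) (B :: Γ) C → GDer (some (Fma.tens A B)) Γ C
  | pass {A Γ C} : GDer (some A) Γ C → GDer none (A :: Γ) C
  | lolliR {S Γ A B} : GDer S (Γ ++ [A]) B → GDer S Γ (Fma.lolli A B)
  | IR : GDer none [] Fma.I
  | tensR {S Γ Δ A B} : GDer S Γ A → GDer none Δ B → GDer S (Γ ++ Δ) (Fma.tens A B)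

/-- Trees: formulae, the empty tree, and pairing. -/
inductive Tr : Type
  | fma : Fma → Tr
  | emp : Tr
  | pair : Tr → Tr → Tr

/-- Contexts: trees with a single hole. -/
inductive Ctx : Type
  | hole : Ctx
  | pairL : Ctx → Tr → Ctx
  | pairR : Tr → Ctx → Ctx

/-- Substitution of a tree into the hole of a context. -/
def plug : Ctx → Tr → Tr
  | Ctx.hole, U => U
  | Ctx.pairL C T, U => Tr.pair (plug C U) T
  | Ctx.pairR T C, U => Tr.pair T (plug C U)

/-- Derivability in the tree sequent calculus LSkT: `TDer T A` means `T ⊢ A`. -/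
inductive TDer : Tr → Fma → Prop
  | ax {A} : TDer (Tr.fma A) A
  | IL {T C} : TDer (plug T Tr.emp) C → TDer (plug T (Tr.fma Fma.I)) C
  | IR : TDer Tr.emp Fma.I
  | tensL {T A B C} : TDer (plug T (Tr.pair (Tr.fma A) (Tr.fma B))) C →
      TDer (plug T (Tr.fma (Fma.tens A B))) C
  | tensR {T U A B} : TDer T A → TDer U B → TDer (Tr.pair T U) (Fma.tens A B)
  | lolliL {T U A B C} : TDer U A → TDer (plug T (Tr.fma B)) C →
      TDer (plug T (Tr.pair (Tr.fma (Fma.lolli A B)) U)) C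
  | lolliR {T A B} : TDer (Tr.pair T (Tr.fma A)) B → TDer T (Fma.lolli A B)
  | assoc {T U₀ U₁ U₂ C} : TDer (plug T (Tr.pair U₀ (Tr.pair U₁ U₂))) C →
      TDer (plug T (Tr.pair (Tr.pair U₀ U₁) U₂)) C
  | unitL {T U C} : TDer (plug T U) C → TDer (plug T (Tr.pair Tr.emp U)) C
  | unitR {T U C} : TDer (plug T (Tr.pair U Tr.emp)) C → TDer (plug T U) C

/-- `T*`: turn a tree into a formula, replacing commas with ⊗ and `-` with `I`. -/
def Tr.star : Tr → Fma
  | Tr.fma A => A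
  | Tr.emp => Fma.I
  | Tr.pair T U => Fma.tens T.star U.star

section CutAux

theorem split_cons {α : Type} {Γ Δ Δ₀ Δ₁ : List α} {A : α}
    (h : Γ ++ Δ = Δ₀ ++ A :: Δ₁) :
    (∃ w, Γ = Δ₀ ++ A :: w ∧ Δ₁ = w ++ Δ) ∨ (∃ w, Δ₀ = Γ ++ w ∧ Δ = w ++ A :: Δ₁) := by
  induction Δ₀ generalizing Γ with
  | nil =>
    cases Γ with
    | nil => exact Or.inr ⟨[], rfl, h⟩
    | cons B Γ' =>
      simp only [List.nil_append, List.cons_append, List.cons.injEq] at h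
      exact Or.inl ⟨Γ', by simp [h.1, h.2], h.2.symm ▸ rfl⟩
  | cons B Δ₀' ih =>
    cases Γ with
    | nil => exact Or.inr ⟨B :: Δ₀', rfl, by simpa using h⟩
    | cons B' Γ' =>
      simp only [List.cons_append, List.cons.injEq] at h
      rcases ih h.2 with ⟨w, h1, h2⟩ | ⟨w, h1, h2⟩
      · exact Or.inl ⟨w, by simp [h.1, h1], h2⟩
      · exact Or.inr ⟨w, by simp [h.1, h1], h2⟩

/-- ccut follows from scut (for a fixed cut formula), by induction on the right premise. -/
theorem ccut_of_scut (A : Fma)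
    (sc : ∀ {S : Option Fma} {Γ Δ : List Fma} {C : Fma},
      GDer S Γ A → GDer (some A) Δ C → GDer S (Γ ++ Δ) C) :
    ∀ {S : Option Fma} {Γ Δ₀ Δ₁ : List Fma} {C : Fma},
      GDer none Γ A → GDer S (Δ₀ ++ A :: Δ₁) C → GDer S (Δ₀ ++ Γ ++ Δ₁) C := by
  intro S Γ Δ₀ Δ₁ C f g
  have key : ∀ {S' : Option Fma} {Λ : List Fma} {C' : Fma}, GDer S' Λ C' →
      ∀ Δ₀ Δ₁, Λ = Δ₀ ++ A :: Δ₁ → GDer S' (Δ₀ ++ Γ ++ Δ₁) C' := by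
    intro S' Λ C' g
    induction g with
    | ax => intro Δ₀ Δ₁ h; exact absurd h (by simp)
    | lolliL g₁ g₂ ih₁ ih₂ =>
      intro Δ₀ Δ₁ h
      rcases split_cons h with ⟨w, h1, h2⟩ | ⟨w, h1, h2⟩
      · subst h1; subst h2
        have := GDer.lolliL (ih₁ Δ₀ w rfl) g₂
        simpa [List.append_assoc] using this
      · subst h1; subst h2
        have := GDer.lolliL g₁ (ih₂ w Δ₁ rfl)
        simpa [List.append_assoc] using this
    | IL g' ih => intro Δ₀ Δ₁ h; exact GDer.IL (ih Δ₀ Δ₁ h)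
    | @tensL A' B' Λ' C'' g' ih =>
      intro Δ₀ Δ₁ h
      exact GDer.tensL (ih (B' :: Δ₀) Δ₁ (by simp [h]))
    | @pass A' Λ' C'' g' ih =>
      intro Δ₀ Δ₁ h
      cases Δ₀ with
      | nil =>
        simp only [List.nil_append, List.cons.injEq] at h
        obtain ⟨h1, h2⟩ := h
        subst h1; subst h2
        simpa using sc f g'
      | cons B Δ₀' =>
        simp only [List.cons_append, List.cons.injEq] at h
        obtain ⟨h1, h2⟩ := h
        subst h1
        exact GDer.pass (ih Δ₀' Δ₁ h2)
    | @lolliR S'' Λ' A' B' g' ih =>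
      intro Δ₀ Δ₁ h
      apply GDer.lolliR
      have := ih Δ₀ (Δ₁ ++ [A']) (by simp [h])
      simpa [List.append_assoc] using this
    | IR => intro Δ₀ Δ₁ h; exact absurd h (by simp)
    | tensR g₁ g₂ ih₁ ih₂ =>
      intro Δ₀ Δ₁ h
      rcases split_cons h with ⟨w, h1, h2⟩ | ⟨w, h1, h2⟩
      · subst h1; subst h2
        have := GDer.tensR (ih₁ Δ₀ w rfl) g₂
        simpa [List.append_assoc] using this
      · subst h1; subst h2
        have := GDer.tensR g₁ (ih₂ w Δ₁ rfl)
        simpa [List.append_assoc] using this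
  exact key g Δ₀ Δ₁ rfl

/-- scut is admissible, by induction on the cut formula. -/
theorem scut : ∀ (A : Fma) {S : Option Fma} {Γ Δ : List Fma} {C : Fma},
    GDer S Γ A → GDer (some A) Δ C → GDer S (Γ ++ Δ) C := by
  intro A
  induction A with
  | atom n =>
    have key : ∀ {S Γ X}, GDer S Γ X → X = Fma.atom n →
        ∀ {Δ C}, GDer (some (Fma.atom n)) Δ C → GDer S (Γ ++ Δ) C := by
      intro S Γ X f
      induction f with
      | ax => rintro rfl Δ C g; exact g
      | lolliL f₁ f₂ ih₁ ih₂ =>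
        rintro rfl Δ C g
        simpa [List.append_assoc] using GDer.lolliL f₁ (ih₂ rfl g)
      | IL f' ih => rintro rfl Δ C g; exact GDer.IL (ih rfl g)
      | tensL f' ih => rintro rfl Δ C g; exact GDer.tensL (ih rfl g)
      | pass f' ih => rintro rfl Δ C g; exact GDer.pass (ih rfl g)
      | lolliR f' ih => intro h; exact absurd h (by simp)
      | IR => intro h; exact absurd h (by simp)
      | tensR f₁ f₂ ih₁ ih₂ => intro h; exact absurd h (by simp)
    intro S Γ Δ C f g; exact key f rfl g
  | I =>
    have key : ∀ {S Γ X}, GDer S Γ X → X = Fma.I →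
        ∀ {Δ C}, GDer (some Fma.I) Δ C → GDer S (Γ ++ Δ) C := by
      intro S Γ X f
      induction f with
      | ax => rintro rfl Δ C g; exact g
      | lolliL f₁ f₂ ih₁ ih₂ =>
        rintro rfl Δ C g
        simpa [List.append_assoc] using GDer.lolliL f₁ (ih₂ rfl g)
      | IL f' ih => rintro rfl Δ C g; exact GDer.IL (ih rfl g)
      | tensL f' ih => rintro rfl Δ C g; exact GDer.tensL (ih rfl g)
      | pass f' ih => rintro rfl Δ C g; exact GDer.pass (ih rfl g)
      | lolliR f' ih => intro h; exact absurd h (by simp)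
      | IR =>
        intro _ Δ C g
        have inner : ∀ {So Δ' C'}, GDer So Δ' C' → So = some Fma.I →
            GDer none Δ' C' := by
          intro So Δ' C' g'
          induction g' with
          | ax => intro h; injection h with h; subst h; exact GDer.IR
          | lolliL g₁ g₂ ih₁ ih₂ => intro h; simp at h
          | IL g'' ih => intro h; exact g''
          | tensL g'' ih => intro h; simp at h
          | pass g'' ih => intro h; simp at h
          | lolliR g'' ih => intro h; exact GDer.lolliR (ih h)
          | IR => intro h; simp at h
          | tensR g₁ g₂ ih₁ ih₂ => intro h; exact GDer.tensR (ih₁ h) g₂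
        simpa using inner g rfl
      | tensR f₁ f₂ ih₁ ih₂ => intro h; exact absurd h (by simp)
    intro S Γ Δ C f g; exact key f rfl g
  | tens A₁ A₂ iha ihb =>
    have cc₂ : ∀ {S : Option Fma} {Γ Δ₀ Δ₁ : List Fma} {C : Fma},
        GDer none Γ A₂ → GDer S (Δ₀ ++ A₂ :: Δ₁) C → GDer S (Δ₀ ++ Γ ++ Δ₁) C :=
      fun f g => ccut_of_scut A₂ (fun f' g' => ihb f' g') f g
    have key : ∀ {S Γ X}, GDer S Γ X → X = Fma.tens A₁ A₂ →
        ∀ {Δ C}, GDer (some (Fma.tens A₁ A₂)) Δ C → GDer S (Γ ++ Δ) C := by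
      intro S Γ X f
      induction f with
      | ax => rintro rfl Δ C g; exact g
      | lolliL f₁ f₂ ih₁ ih₂ =>
        rintro rfl Δ C g
        simpa [List.append_assoc] using GDer.lolliL f₁ (ih₂ rfl g)
      | IL f' ih => rintro rfl Δ C g; exact GDer.IL (ih rfl g)
      | tensL f' ih => rintro rfl Δ C g; exact GDer.tensL (ih rfl g)
      | pass f' ih => rintro rfl Δ C g; exact GDer.pass (ih rfl g)
      | lolliR f' ih => intro h; exact absurd h (by simp)
      | IR => intro h; exact absurd h (by simp)
      | @tensR S' Γ₁ Γ₂ A' B' f₁ f₂ ih₁ ih₂ =>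
        intro h Δ C g
        injection h with h1 h2
        subst h1; subst h2
        have inner : ∀ {So Δ' C'}, GDer So Δ' C' → So = some (Fma.tens A' B') →
            GDer S' (Γ₁ ++ Γ₂ ++ Δ') C' := by
          intro So Δ' C' g'
          induction g' with
          | ax =>
            intro h; injection h with h; subst h
            simpa using GDer.tensR f₁ f₂
          | lolliL g₁ g₂ ih₁' ih₂' => intro h; simp at h
          | IL g'' ih' => intro h; simp at h
          | tensL g'' ih' =>
            intro h
            injection h with h
            injection h with h1 h2
            subst h1; subst h2
            exact cc₂ f₂ (iha f₁ g'')
          | pass g'' ih' => intro h; simp at h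
          | @lolliR So' Δ'' A' B' g'' ih' =>
            intro h
            apply GDer.lolliR
            simpa [List.append_assoc] using ih' h
          | IR => intro h; simp at h
          | tensR g₁ g₂ ih₁' ih₂' =>
            intro h
            simpa [List.append_assoc] using GDer.tensR (ih₁' h) g₂
        simpa [List.append_assoc] using inner g rfl
    intro S Γ Δ C f g; exact key f rfl g
  | lolli A₁ A₂ iha ihb =>
    have cc₁ : ∀ {S : Option Fma} {Γ Δ₀ Δ₁ : List Fma} {C : Fma},
        GDer none Γ A₁ → GDer S (Δ₀ ++ A₁ :: Δ₁) C → GDer S (Δ₀ ++ Γ ++ Δ₁) C :=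
      fun f g => ccut_of_scut A₁ (fun f' g' => iha f' g') f g
    have key : ∀ {S Γ X}, GDer S Γ X → X = Fma.lolli A₁ A₂ →
        ∀ {Δ C}, GDer (some (Fma.lolli A₁ A₂)) Δ C → GDer S (Γ ++ Δ) C := by
      intro S Γ X f
      induction f with
      | ax => rintro rfl Δ C g; exact g
      | lolliL f₁ f₂ ih₁ ih₂ =>
        rintro rfl Δ C g
        simpa [List.append_assoc] using GDer.lolliL f₁ (ih₂ rfl g)
      | IL f' ih => rintro rfl Δ C g; exact GDer.IL (ih rfl g)
      | tensL f' ih => rintro rfl Δ C g; exact GDer.tensL (ih rfl g)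
      | pass f' ih => rintro rfl Δ C g; exact GDer.pass (ih rfl g)
      | IR => intro h; exact absurd h (by simp)
      | tensR f₁ f₂ ih₁ ih₂ => intro h; exact absurd h (by simp)
      | @lolliR S' Γ' A' B' f' ih =>
        intro h Δ C g
        injection h with h1 h2
        subst h1; subst h2
        have inner : ∀ {So Δ' C'}, GDer So Δ' C' → So = some (Fma.lolli A' B') →
            GDer S' (Γ' ++ Δ') C' := by
          intro So Δ' C' g'
          induction g' with
          | ax =>
            intro h; injection h with h; subst h
            simpa using GDer.lolliR f'
          | lolliL g₁ g₂ ih₁' ih₂' =>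
            intro h
            injection h with h
            injection h with h1 h2
            subst h1; subst h2
            have step1 := cc₁ (Δ₀ := Γ') (Δ₁ := []) g₁ f'
            have step2 := ihb step1 g₂
            simpa [List.append_assoc] using step2
          | IL g'' ih' => intro h; simp at h
          | tensL g'' ih' => intro h; simp at h
          | pass g'' ih' => intro h; simp at h
          | lolliR g'' ih' =>
            intro h
            apply GDer.lolliR
            simpa [List.append_assoc] using ih' h
          | IR => intro h; simp at h
          | tensR g₁ g₂ ih₁' ih₂' =>
            intro h
            simpa [List.append_assoc] using GDer.tensR (ih₁' h) g₂
        exact inner g rfl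
    intro S Γ Δ C f g; exact key f rfl g

/-- ccut is admissible. -/
theorem ccut (A : Fma) {S : Option Fma} {Γ Δ₀ Δ₁ : List Fma} {C : Fma}
    (f : GDer none Γ A) (g : GDer S (Δ₀ ++ A :: Δ₁) C) : GDer S (Δ₀ ++ Γ ++ Δ₁) C :=
  ccut_of_scut A (fun f' g' => scut A f' g') f g

/-- Interpretation of a context applied to a formula. -/
def pstar : Ctx → Fma → Fma
  | Ctx.hole, X => X
  | Ctx.pairL c t, X => Fma.tens (pstar c X) t.star
  | Ctx.pairR t c, X => Fma.tens t.star (pstar c X)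

theorem plug_star (c : Ctx) (U : Tr) : (plug c U).star = pstar c U.star := by
  induction c with
  | hole => rfl
  | pairL c t ih => simp [plug, pstar, Tr.star, ih]
  | pairR t c ih => simp [plug, pstar, Tr.star, ih]

/-- Congruence: derivability is preserved under context interpretation. -/
theorem cong {X Y : Fma} (h : GDer (some X) [] Y) :
    ∀ c : Ctx, GDer (some (pstar c X)) [] (pstar c Y) := by
  intro c
  induction c with
  | hole => exact h
  | pairL c t ih =>
    apply GDer.tensL
    exact GDer.tensR (Γ := []) ih (GDer.pass GDer.ax)
  | pairR t c ih =>
    apply GDer.tensL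
    exact GDer.tensR (Γ := []) GDer.ax (GDer.pass ih)

/-- Substitution into a context via cut. -/
theorem substG {X Y : Fma} (h : GDer (some X) [] Y) {c : Ctx} {Γ : List Fma} {Z : Fma}
    (g : GDer (some (pstar c Y)) Γ Z) : GDer (some (pstar c X)) Γ Z := by
  have := scut (pstar c Y) (Γ := []) (cong h c) g
  simpa using this

end CutAux

/-- From LSkT to LSkG: `T ⊢ C` yields `T* | ⊢ C`. -/
theorem T2G (T : Tr) (C : Fma) (f : TDer T C) : GDer (some T.star) [] C := by
  induction f with
  | ax => exact GDer.ax
  | IL _ ih =>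
    rw [plug_star] at ih ⊢
    exact ih
  | IR => exact GDer.IL GDer.IR
  | tensL _ ih =>
    rw [plug_star] at ih ⊢
    exact ih
  | tensR f₁ f₂ ihf ihg =>
    exact GDer.tensL (GDer.tensR (Γ := []) ihf (GDer.pass ihg))
  | @lolliL T U A B C _ _ ihU ihT =>
    rw [plug_star] at ihT ⊢
    refine substG (c := T) ?_ ihT
    apply GDer.tensL
    exact GDer.lolliL (Δ := []) (GDer.pass ihU) GDer.ax
  | @lolliR T A B _ ih =>
    apply GDer.lolliR (Γ := [])
    have h : GDer (some T.star) [A] (Tr.pair T (Tr.fma A)).star :=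
      GDer.tensR (Γ := []) (Δ := [A]) GDer.ax (GDer.pass GDer.ax)
    simpa using scut _ h ih
  | @assoc T U₀ U₁ U₂ C _ ih =>
    rw [plug_star] at ih ⊢
    refine substG (c := T) ?_ ih
    apply GDer.tensL
    apply GDer.tensL
    exact GDer.tensR (Γ := []) GDer.ax
      (GDer.pass (GDer.tensR (Γ := []) GDer.ax (GDer.pass GDer.ax)))
  | @unitL T U C _ ih =>
    rw [plug_star] at ih ⊢
    refine substG (c := T) ?_ ih
    exact GDer.tensL (GDer.IL (GDer.pass GDer.ax))
  | @unitR T U C _ ih =>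
    rw [plug_star] at ih ⊢
    refine substG (c := T) ?_ ih
    exact GDer.tensR (Γ := []) GDer.ax GDer.IR
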